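/- Pointwise right Kan extensions are stable under pasting with comma squares: if ν exhibits r : B ⥤ C as the pointwise right Kan extension of f : A ⥤ C along k : A ⥤ B, and given any functor b : E ⥤ B with comma square over the cospan (b, k) — i.e., the comma category Comma b k with projections h : Comma b k ⥤ E, g : Comma b k ⥤ A and canonical transformation λ : h ⋙ b ⟶ g ⋙ k — then the pasted transformation exhibits b ⋙ r as the pointwise right Kan extension of g ⋙ f along h. -/

import Mathlib

open CategoryTheory

universe v₁ v₂ v₃ v₄ u₁ u₂ u₃ u₄

section Aux

variable {A : Type u₁} {B : Type u₂} {E : Type u₄}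
    [Category.{v₁} A] [Category.{v₂} B] [Category.{v₄} E]
    (k : A ⥤ B) (b : E ⥤ B) (e : E)

@[simps]
def commaG : StructuredArrow (b.obj e) k ⥤ StructuredArrow e (Comma.fst b k) where
  obj y := StructuredArrow.mk (Y := (Comma.mk e y.right y.hom : Comma b k)) (𝟙 e)
  map {y₁ y₂} m := StructuredArrow.homMk
    { left := 𝟙 e, right := m.right,
      w := by dsimp; simpa using (StructuredArrow.w m) }

@[simps]
def commaF : StructuredArrow e (Comma.fst b k) ⥤ StructuredArrow (b.obj e) k where
  obj x := StructuredArrow.mk (b.map x.hom ≫ x.right.hom)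
  map {x₁ x₂} m := StructuredArrow.homMk m.right.right (by
    have h1 : x₁.hom ≫ m.right.left = x₂.hom := StructuredArrow.w m
    have h2 := m.right.w
    dsimp at h1 h2 ⊢
    rw [← h1]
    simp only [Functor.map_comp, Category.assoc, h2])

def commaAdj : commaG k b e ⊣ commaF k b e :=
  Adjunction.mkOfUnitCounit
    { unit := { app := fun y => StructuredArrow.homMk (𝟙 y.right) (by simp [commaF, commaG])
                naturality := fun X Y f => by
                  ext
                  exact (Category.comp_id _).trans (Category.id_comp _).symm }
      counit :=
        { app := fun x => StructuredArrow.homMk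
            { left := x.hom, right := 𝟙 x.right.right, w := by simp [commaF, commaG] }
              (by dsimp [commaF, commaG]; simp)
          naturality := fun X Y f => by
            ext
            · exact (Category.id_comp _).trans (StructuredArrow.w f).symm
            · exact (Category.comp_id _).trans (Category.id_comp _).symm }
      left_triangle := by
        ext y
        · show 𝟙 e ≫ 𝟙 e ≫ 𝟙 e = 𝟙 e
          simp
        · show 𝟙 y.right ≫ 𝟙 y.right ≫ 𝟙 y.right = 𝟙 y.right
          simp
      right_triangle := by
        ext x
        show 𝟙 x.right.right ≫ 𝟙 x.right.right ≫ 𝟙 x.right.right = 𝟙 x.right.right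
        simp }

instance : (commaG k b e).Initial := Functor.initial_of_adjunction (commaAdj k b e)

end Aux

/-- Pointwise right Kan extensions are stable under pasting with comma squares: if
`ν : k ⋙ r ⟶ f` exhibits `r` as a pointwise right Kan extension of `f` along `k`, and
`b : E ⥤ B` is any functor, then the transformation obtained by pasting `ν` with the
comma square of `(b, k)` exhibits `b ⋙ r` as a pointwise right Kan extension of
`Comma.snd b k ⋙ f` along `Comma.fst b k`. -/
theorem pointwise_rke_comma_stable
    {A : Type u₁} {B : Type u₂} {C : Type u₃} {E : Type u₄}
    [Category.{v₁} A] [Category.{v₂} B] [Category.{v₃} C] [Category.{v₄} E]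
    (k : A ⥤ B) (f : A ⥤ C) (r : B ⥤ C) (ν : k ⋙ r ⟶ f)
    (H : (Functor.RightExtension.mk r ν).IsPointwiseRightKanExtension)
    (b : E ⥤ B) :
    Nonempty ((Functor.RightExtension.mk (b ⋙ r)
      ((Functor.associator (Comma.fst b k) b r).inv ≫
        Functor.whiskerRight (Comma.natTrans b k) r ≫
        (Functor.associator (Comma.snd b k) k r).hom ≫
        Functor.whiskerLeft (Comma.snd b k) ν)).IsPointwiseRightKanExtension) := by
  constructor
  intro e
  exact (Functor.Initial.isLimitWhiskerEquiv (commaG k b e) _)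
    ((H (b.obj e)).ofIsoLimit (Limits.Cones.ext (Iso.refl _) (by
      intro y
      dsimp
      simp
      show r.map y.hom ≫ ν.app y.right = 𝟙 _ ≫ (b ⋙ r).map (𝟙 e) ≫ r.map y.hom ≫ ν.app y.right
      simp)))
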